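/- arXiv:1904.07559 — 6 statements merged into one kernel-verified Lean document; each statement's English description precedes it below -/
import Mathlib

section
/- Preferential interpretations are closed under disjoint union: given a countable family {P_s}_{s∈S} of preferential interpretations each of which is a preferential model of a defeasible knowledge base K, the disjoint union U — whose domain is {(x,s) : x ∈ Δ^{P_s}, s ∈ S}, which interprets each concept name A as {(x,s) : x ∈ A^{P_s}}, each role name r as {((x,s),(y,s)) : (x,y) ∈ r^{P_s}}, and whose order is {((x,s),(y,s)) : x ≺^{P_s} y} — is a preferential interpretation and a preferential model of K. -/
namespace DefeasibleDL

/-- ALC concepts over concept names `C` and role names `R`. -/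
inductive Concept (C R : Type) : Type where
  | top : Concept C R
  | bot : Concept C R
  | atom : C → Concept C R
  | neg : Concept C R → Concept C R
  | conj : Concept C R → Concept C R → Concept C R
  | disj : Concept C R → Concept C R → Concept C R
  | ex : R → Concept C R → Concept C R
  | all : R → Concept C R → Concept C R

/-- A classical interpretation with domain `D`. -/
structure ClassInterp (C R D : Type) where
  interpC : C → Set D
  interpR : R → D → D → Prop

/-- Extension of a concept in a classical interpretation. -/
def ClassInterp.eval {C R D : Type} (I : ClassInterp C R D) : Concept C R → Set D
  | .top => Set.univ
  | .bot => ∅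
  | .atom a => I.interpC a
  | .neg c => (I.eval c)ᶜ
  | .conj c d => I.eval c ∩ I.eval d
  | .disj c d => I.eval c ∪ I.eval d
  | .ex r c => {x | ∃ y, I.interpR r x y ∧ y ∈ I.eval c}
  | .all r c => {x | ∀ y, I.interpR r x y → y ∈ I.eval c}

/-- The `pref`-minimal elements of a set `S`. -/
def minSet {D : Type} (pref : D → D → Prop) (S : Set D) : Set D :=
  {x | x ∈ S ∧ ∀ y ∈ S, ¬ pref y x}

/-- A preferential interpretation: a classical interpretation together with a smooth
strict partial order on the domain. -/
structure PrefInterp (C R D : Type) extends ClassInterp C R D where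
  pref : D → D → Prop
  pref_irrefl : ∀ x, ¬ pref x x
  pref_trans : ∀ x y z, pref x y → pref y z → pref x z
  smooth : ∀ c : Concept C R, (toClassInterp.eval c).Nonempty →
      (minSet pref (toClassInterp.eval c)).Nonempty

/-- Satisfaction of a general concept inclusion `c ⊑ d`. -/
def PrefInterp.satGCI {C R D : Type} (P : PrefInterp C R D) (c d : Concept C R) : Prop :=
  P.toClassInterp.eval c ⊆ P.toClassInterp.eval d

/-- Satisfaction of a defeasible concept inclusion `c ⊏∼ d`. -/
def PrefInterp.satDCI {C R D : Type} (P : PrefInterp C R D) (c d : Concept C R) : Prop :=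
  minSet P.pref (P.toClassInterp.eval c) ⊆ P.toClassInterp.eval d

/-- A strict partial order is modular if its incomparability relation is transitive. -/
def Modular {D : Type} (pref : D → D → Prop) : Prop :=
  ∀ x y z : D, (¬ pref x y ∧ ¬ pref y x) → (¬ pref y z ∧ ¬ pref z y) →
    (¬ pref x z ∧ ¬ pref z x)

/-- Convexity of a height function: every value below an attained value is attained. -/
def Convex {D : Type} (h : D → ℕ) : Prop :=
  ∀ (x : D) (j : ℕ), j < h x → ∃ y : D, h y = j

/-- `pref` is ranked by the convex height function `h`. -/
def RankedBy {D : Type} (pref : D → D → Prop) (h : D → ℕ) : Prop :=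
  Convex h ∧ ∀ x y : D, pref x y ↔ h x < h y

/-- `pref` is a ranked order. -/
def IsRanked {D : Type} (pref : D → D → Prop) : Prop :=
  ∃ h : D → ℕ, RankedBy pref h

/-- Statements: general or defeasible concept inclusions. -/
inductive Stmt (C R : Type) : Type where
  | gci : Concept C R → Concept C R → Stmt C R
  | dci : Concept C R → Concept C R → Stmt C R

def PrefInterp.satStmt {C R D : Type} (P : PrefInterp C R D) : Stmt C R → Prop
  | .gci c d => P.satGCI c d
  | .dci c d => P.satDCI c d

/-- A defeasible knowledge base: a finite TBox and a finite DTBox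
(both represented as sets of pairs of concepts). -/
structure KB (C R : Type) where
  tbox : Set (Concept C R × Concept C R)
  dbox : Set (Concept C R × Concept C R)
  tbox_finite : tbox.Finite
  dbox_finite : dbox.Finite

/-- The statements of a knowledge base. -/
def KB.stmts {C R : Type} (K : KB C R) : Set (Stmt C R) :=
  {s | (∃ p ∈ K.tbox, s = Stmt.gci p.1 p.2) ∨ (∃ p ∈ K.dbox, s = Stmt.dci p.1 p.2)}

/-- A preferential model of a knowledge base. -/
def PrefInterp.isModel {C R D : Type} (P : PrefInterp C R D) (K : KB C R) : Prop :=
  (∀ p ∈ K.tbox, P.satGCI p.1 p.2) ∧ (∀ p ∈ K.dbox, P.satDCI p.1 p.2)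

/-- Preferential entailment. -/
def prefEntails {C R : Type} (K : KB C R) (s : Stmt C R) : Prop :=
  ∀ (D : Type) (_ : Nonempty D) (P : PrefInterp C R D), P.isModel K → P.satStmt s

/-- Modular entailment. -/
def modEntails {C R : Type} (K : KB C R) (s : Stmt C R) : Prop :=
  ∀ (D : Type) (_ : Nonempty D) (P : PrefInterp C R D),
    Modular P.pref → P.isModel K → P.satStmt s

section DisjointUnion

variable {C R S : Type} {Dm : S → Type} (P : ∀ s, PrefInterp C R (Dm s))

/-- Classical part of the disjoint union. -/
def unionClass : ClassInterp C R (Σ s, Dm s) where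
  interpC a := {p | p.2 ∈ (P p.1).interpC a}
  interpR r p q := ∃ (s : S) (x y : Dm s), p = ⟨s, x⟩ ∧ q = ⟨s, y⟩ ∧ (P s).interpR r x y

lemma unionClass_eval (c : Concept C R) :
    ∀ p : Σ s, Dm s, p ∈ (unionClass P).eval c ↔ p.2 ∈ (P p.1).eval c := by
  induction c with
  | top => intro p; simp [ClassInterp.eval]
  | bot => intro p; simp [ClassInterp.eval]
  | atom a => intro p; simp [ClassInterp.eval, unionClass]
  | neg c ih => intro p; simp [ClassInterp.eval, Set.mem_compl_iff, ih p]
  | conj c d ihc ihd => intro p; simp [ClassInterp.eval, ihc p, ihd p]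
  | disj c d ihc ihd => intro p; simp [ClassInterp.eval, ihc p, ihd p]
  | ex r c ih =>
      intro p
      constructor
      · rintro ⟨q, ⟨s, x, y, rfl, rfl, hr⟩, hq⟩
        exact ⟨y, hr, (ih ⟨s, y⟩).mp hq⟩
      · rintro ⟨y, hr, hy⟩
        refine ⟨⟨p.1, y⟩, ⟨p.1, p.2, y, Sigma.eta p ▸ rfl, rfl, hr⟩, (ih _).mpr hy⟩
  | all r c ih =>
      intro p
      constructor
      · rintro h y hr
        exact (ih ⟨p.1, y⟩).mp (h ⟨p.1, y⟩ ⟨p.1, p.2, y, Sigma.eta p ▸ rfl, rfl, hr⟩)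
      · rintro h q ⟨s, x, y, rfl, rfl, hr⟩
        exact (ih ⟨s, y⟩).mpr (h y hr)

/-- Order of the disjoint union. -/
def unionPref (p q : Σ s, Dm s) : Prop :=
  ∃ (s : S) (x y : Dm s), p = ⟨s, x⟩ ∧ q = ⟨s, y⟩ ∧ (P s).pref x y

lemma unionPref_iff (p q : Σ s, Dm s) :
    unionPref P p q ↔ ∃ h : p.1 = q.1, (P q.1).pref (h ▸ p.2) q.2 := by
  constructor
  · rintro ⟨s, x, y, rfl, rfl, h⟩; exact ⟨rfl, h⟩
  · rintro ⟨h, hp⟩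
    rcases p with ⟨s, x⟩; rcases q with ⟨t, y⟩
    cases h
    exact ⟨s, x, y, rfl, rfl, hp⟩

/-- The disjoint union as a preferential interpretation. -/
def unionInterp : PrefInterp C R (Σ s, Dm s) where
  toClassInterp := unionClass P
  pref := unionPref P
  pref_irrefl := by
    rintro ⟨s, x⟩ ⟨t, y, z, h1, h2, hp⟩
    cases h1; cases h2
    exact (P _).pref_irrefl _ hp
  pref_trans := by
    rintro p q r ⟨s, x, y, rfl, rfl, h1⟩ ⟨t, y', z, he, rfl, h2⟩
    cases he
    exact ⟨s, x, z, rfl, rfl, (P s).pref_trans _ _ _ h1 h2⟩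
  smooth := by
    intro c ⟨⟨s, x⟩, hx⟩
    have hx' : x ∈ (P s).eval c := (unionClass_eval P c ⟨s, x⟩).mp hx
    obtain ⟨y, hy, hmin⟩ := (P s).smooth c ⟨x, hx'⟩
    refine ⟨⟨s, y⟩, (unionClass_eval P c ⟨s, y⟩).mpr hy, ?_⟩
    rintro q hq ⟨t, a, b, rfl, he, hp⟩
    obtain ⟨rfl, hby⟩ : s = t ∧ HEq y b := by
      simpa using he
    obtain rfl := eq_of_heq hby
    exact hmin a ((unionClass_eval P c ⟨s, a⟩).mp hq) hp

end DisjointUnion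

/-- preferential interpretations are closed under disjoint union.
Given a countable family of preferential models of a defeasible knowledge base `K`,
the disjoint union (with the indicated interpretation of concept names, role names
and the preference order) is a preferential interpretation and a preferential model
of `K`. -/
theorem disjointUnion_prefInterp_model {C R S : Type} [Finite C] [Finite R]
    [Countable S] [Nonempty S] {Dm : S → Type} (_ : ∀ s, Nonempty (Dm s))
    (P : ∀ s, PrefInterp C R (Dm s)) (K : KB C R)
    (hmod : ∀ s, (P s).isModel K) :
    ∃ U : PrefInterp C R (Σ s, Dm s),
      (∀ a : C, U.interpC a = {p : Σ s, Dm s | p.2 ∈ (P p.1).interpC a}) ∧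
      (∀ (r : R) (p q : Σ s, Dm s), U.interpR r p q ↔
        ∃ (s : S) (x y : Dm s), p = ⟨s, x⟩ ∧ q = ⟨s, y⟩ ∧ (P s).interpR r x y) ∧
      (∀ p q : Σ s, Dm s, U.pref p q ↔
        ∃ (s : S) (x y : Dm s), p = ⟨s, x⟩ ∧ q = ⟨s, y⟩ ∧ (P s).pref x y) ∧
      U.isModel K := by
  refine ⟨unionInterp P, fun a => rfl, fun r p q => Iff.rfl, fun p q => Iff.rfl, ?_, ?_⟩
  · intro pr hpr p hp
    exact (unionClass_eval P pr.2 p).mpr ((hmod p.1).1 pr hpr ((unionClass_eval P pr.1 p).mp hp))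
  · rintro pr hpr p ⟨hp, hmin⟩
    refine (unionClass_eval P pr.2 p).mpr ((hmod p.1).2 pr hpr ⟨(unionClass_eval P pr.1 p).mp hp, ?_⟩)
    intro y hy hpy
    exact hmin ⟨p.1, y⟩ ((unionClass_eval P pr.1 ⟨p.1, y⟩).mpr hy)
      ⟨p.1, y, p.2, rfl, Sigma.eta p ▸ rfl, hpy⟩

end DefeasibleDL
end

section
/- Uniqueness of the ranking function: for every ranked interpretation R = (Δ^R, ·^R, ≺^R) there is exactly one function h : Δ^R → ℕ satisfying the convexity property and such that for all x, y ∈ Δ^R, x ≺^R y if and only if h(x) < h(y). -/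
namespace DefeasibleDL

/-- Two convex height functions ranking the same order are pointwise comparable. -/
lemma rankedBy_le {D : Type} {pref : D → D → Prop} {h1 h2 : D → ℕ}
    (H1 : RankedBy pref h1) (H2 : RankedBy pref h2) : ∀ x, h2 x ≤ h1 x := by
  have key : ∀ n x, h1 x = n → h2 x ≤ n := by
    intro n
    induction n using Nat.strong_induction_on with
    | _ n ih =>
      intro x hx
      by_contra hgt
      push_neg at hgt
      obtain ⟨y, hy⟩ := H2.1 x n hgt
      have hp : pref y x := (H2.2 y x).mpr (by omega)
      have h1lt : h1 y < h1 x := (H1.2 y x).mp hp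
      have := ih (h1 y) (by omega) y rfl
      omega
  exact fun x => key (h1 x) x rfl

/-- for every ranked interpretation there is exactly one convex
height function characterising its preference order. -/
theorem rank_function_unique {C R D : Type} [Finite C] [Finite R]
    (_ : Nonempty D) (M : PrefInterp C R D) (hmod : Modular M.pref)
    (hranked : IsRanked M.pref) :
    ∃! h : D → ℕ, RankedBy M.pref h := by
  obtain ⟨h, hh⟩ := hranked
  refine ⟨h, hh, fun g hg => funext fun x => ?_⟩
  exact le_antisymm (rankedBy_le hh hg x) (rankedBy_le hg hh x)

end DefeasibleDL
end

section
/- Finite-model property for defeasible ALC: every defeasible knowledge base K = T ∪ D that has a modular model also has a ranked model with finite domain. -/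
namespace DefeasibleDL

/-! ### Auxiliary machinery for the finite model property -/

/-- The set of subconcepts of a concept. -/
def Concept.subc {C R : Type} : Concept C R → Set (Concept C R)
  | .top => {.top}
  | .bot => {.bot}
  | .atom a => {.atom a}
  | .neg c => insert (.neg c) c.subc
  | .conj c d => insert (.conj c d) (c.subc ∪ d.subc)
  | .disj c d => insert (.disj c d) (c.subc ∪ d.subc)
  | .ex r c => insert (.ex r c) c.subc
  | .all r c => insert (.all r c) c.subc

lemma subc_self {C R : Type} (c : Concept C R) : c ∈ c.subc := by
  cases c <;> simp [Concept.subc]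

lemma subc_finite {C R : Type} (c : Concept C R) : c.subc.Finite := by
  induction c with
  | top => exact Set.finite_singleton _
  | bot => exact Set.finite_singleton _
  | atom a => exact Set.finite_singleton _
  | neg c ih => exact ih.insert _
  | conj c d ih1 ih2 => exact (ih1.union ih2).insert _
  | disj c d ih1 ih2 => exact (ih1.union ih2).insert _
  | ex r c ih => exact ih.insert _
  | all r c ih => exact ih.insert _

lemma subc_trans {C R : Type} {a b c : Concept C R} (hab : a ∈ b.subc)
    (hbc : b ∈ c.subc) : a ∈ c.subc := by
  induction c with
  | top => simp only [Concept.subc, Set.mem_singleton_iff] at hbc; subst hbc; exact hab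
  | bot => simp only [Concept.subc, Set.mem_singleton_iff] at hbc; subst hbc; exact hab
  | atom a' => simp only [Concept.subc, Set.mem_singleton_iff] at hbc; subst hbc; exact hab
  | neg c ih =>
    rcases Set.mem_insert_iff.mp hbc with rfl | h
    · exact hab
    · exact Set.mem_insert_iff.mpr (Or.inr (ih h))
  | conj c d ih1 ih2 =>
    rcases Set.mem_insert_iff.mp hbc with rfl | h
    · exact hab
    · rcases h with h | h
      · exact Set.mem_insert_iff.mpr (Or.inr (Or.inl (ih1 h)))
      · exact Set.mem_insert_iff.mpr (Or.inr (Or.inr (ih2 h)))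
  | disj c d ih1 ih2 =>
    rcases Set.mem_insert_iff.mp hbc with rfl | h
    · exact hab
    · rcases h with h | h
      · exact Set.mem_insert_iff.mpr (Or.inr (Or.inl (ih1 h)))
      · exact Set.mem_insert_iff.mpr (Or.inr (Or.inr (ih2 h)))
  | ex r c ih =>
    rcases Set.mem_insert_iff.mp hbc with rfl | h
    · exact hab
    · exact Set.mem_insert_iff.mpr (Or.inr (ih h))
  | all r c ih =>
    rcases Set.mem_insert_iff.mp hbc with rfl | h
    · exact hab
    · exact Set.mem_insert_iff.mpr (Or.inr (ih h))

/-- A finite conjunction of a list of concepts. -/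
def bigConj {C R : Type} (l : List (Concept C R)) : Concept C R :=
  l.foldr .conj .top

lemma eval_bigConj {C R D : Type} (I : ClassInterp C R D) (l : List (Concept C R)) (x : D) :
    x ∈ I.eval (bigConj l) ↔ ∀ c ∈ l, x ∈ I.eval c := by
  induction l with
  | nil => simp [bigConj, ClassInterp.eval]
  | cons c l ih => simp [bigConj, ClassInterp.eval, List.foldr] at ih ⊢; tauto
/-- finite-model property: every defeasible knowledge base that has
a modular model also has a ranked model with finite domain. -/
theorem finite_model_property {C R : Type} [Finite C] [Finite R] (K : KB C R)
    (hmod : ∃ (D : Type) (_ : Nonempty D) (M : PrefInterp C R D),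
      Modular M.pref ∧ M.isModel K) :
    ∃ (D : Type) (_ : Nonempty D) (_ : Finite D) (M : PrefInterp C R D),
      IsRanked M.pref ∧ M.isModel K := by
  classical
  obtain ⟨D, hne, M, hModular, hModel⟩ := hmod
  -- the closure set of the knowledge base
  set G : Set (Concept C R × Concept C R) := K.tbox ∪ K.dbox with hG
  set S : Set (Concept C R) := ⋃ p ∈ G, (Concept.subc p.1 ∪ Concept.subc p.2) with hSdef
  have hGfin : G.Finite := K.tbox_finite.union K.dbox_finite
  have hSfin : S.Finite := hGfin.biUnion (fun p _ => (subc_finite _).union (subc_finite _))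
  have hS_sub : ∀ {b c : Concept C R}, b ∈ Concept.subc c → c ∈ S → b ∈ S := by
    intro b c hbc hc
    rw [hSdef, Set.mem_iUnion₂] at hc ⊢
    obtain ⟨p, hp, hcp⟩ := hc
    rcases hcp with h | h
    · exact ⟨p, hp, Or.inl (subc_trans hbc h)⟩
    · exact ⟨p, hp, Or.inr (subc_trans hbc h)⟩
  have hmemG : ∀ p ∈ G, p.1 ∈ S ∧ p.2 ∈ S := by
    intro p hp
    constructor <;> (rw [hSdef, Set.mem_iUnion₂])
    · exact ⟨p, hp, Or.inl (subc_self _)⟩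
    · exact ⟨p, hp, Or.inr (subc_self _)⟩
  -- types
  set ev : Concept C R → Set D := M.toClassInterp.eval with hev
  set τ : D → (↥S → Prop) := fun x s => x ∈ ev s.1 with hτ
  let Q := {t : ↥S → Prop // ∃ x, τ x = t}
  haveI : Finite ↥S := hSfin
  haveI : Finite Q := Subtype.finite
  haveI : Fintype Q := Fintype.ofFinite Q
  have τeq : ∀ {x y : D}, τ x = τ y → ∀ c, c ∈ S → (x ∈ ev c ↔ y ∈ ev c) := by
    intro x y h c hc
    exact iff_of_eq (congrFun h ⟨c, hc⟩)
  -- the filtrated classical interpretation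
  set If : ClassInterp C R Q :=
    { interpC := fun a => {t | ∃ h : Concept.atom a ∈ S, t.1 ⟨Concept.atom a, h⟩}
      interpR := fun r t t' => ∃ x y, τ x = t.1 ∧ τ y = t'.1 ∧ M.interpR r x y } with hIf
  -- filtration lemma
  have filt : ∀ (c : Concept C R), c ∈ S → ∀ (t : Q) (x : D), τ x = t.1 →
      (t ∈ If.eval c ↔ x ∈ ev c) := by
    intro c
    induction c with
    | top => intro _ t x hx; simp [ClassInterp.eval, hev]
    | bot => intro _ t x hx; simp [ClassInterp.eval, hev]
    | atom a =>
      intro hc t x hx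
      constructor
      · rintro ⟨h, ht⟩
        rw [← hx] at ht
        exact ht
      · intro h
        exact ⟨hc, by rw [← hx]; exact h⟩
    | neg c ih =>
      intro hc t x hx
      have hcS : c ∈ S := hS_sub (by simp [Concept.subc, subc_self]) hc
      have := ih hcS t x hx
      simp only [ClassInterp.eval, Set.mem_compl_iff, hev] at this ⊢
      rw [this]
    | conj c d ih1 ih2 =>
      intro hc t x hx
      have hcS : c ∈ S := hS_sub (by simp [Concept.subc, subc_self]) hc
      have hdS : d ∈ S := hS_sub (by simp [Concept.subc, subc_self]) hc
      have h1 := ih1 hcS t x hx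
      have h2 := ih2 hdS t x hx
      simp only [ClassInterp.eval, Set.mem_inter_iff, hev] at h1 h2 ⊢
      rw [h1, h2]
    | disj c d ih1 ih2 =>
      intro hc t x hx
      have hcS : c ∈ S := hS_sub (by simp [Concept.subc, subc_self]) hc
      have hdS : d ∈ S := hS_sub (by simp [Concept.subc, subc_self]) hc
      have h1 := ih1 hcS t x hx
      have h2 := ih2 hdS t x hx
      simp only [ClassInterp.eval, Set.mem_union, hev] at h1 h2 ⊢
      rw [h1, h2]
    | ex r c ih =>
      intro hc t x hx
      have hcS : c ∈ S := hS_sub (by simp [Concept.subc, subc_self]) hc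
      constructor
      · rintro ⟨t', ⟨x₀, y₀, hx₀, hy₀, hr⟩, ht'⟩
        have hy := (ih hcS t' y₀ hy₀).mp ht'
        have hx₀' : x₀ ∈ ev (Concept.ex r c) := ⟨y₀, hr, hy⟩
        exact (τeq (hx₀.trans hx.symm) _ hc).mp hx₀'
      · rintro ⟨y, hr, hy⟩
        exact ⟨⟨τ y, y, rfl⟩, ⟨x, y, hx, rfl, hr⟩, (ih hcS ⟨τ y, y, rfl⟩ y rfl).mpr hy⟩
    | all r c ih =>
      intro hc t x hx
      have hcS : c ∈ S := hS_sub (by simp [Concept.subc, subc_self]) hc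
      constructor
      · intro hAll y hr
        exact (ih hcS ⟨τ y, y, rfl⟩ y rfl).mp (hAll ⟨τ y, y, rfl⟩ ⟨x, y, hx, rfl, hr⟩)
      · rintro hx' t' ⟨x₀, y₀, hx₀, hy₀, hr⟩
        have hx₀' : x₀ ∈ ev (Concept.all r c) := (τeq (hx₀.trans hx.symm) _ hc).mpr hx'
        exact (ih hcS t' y₀ hy₀).mpr (hx₀' y₀ hr)
  -- the characteristic concept of a type
  set l : List (Concept C R) := hSfin.toFinset.toList with hl
  have hlmem : ∀ c : Concept C R, c ∈ l ↔ c ∈ S := by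
    intro c; rw [hl, Finset.mem_toList, Set.Finite.mem_toFinset]
  set γ : Q → Concept C R := fun t =>
    bigConj (l.attach.map fun c =>
      if t.1 ⟨c.1, (hlmem c.1).mp c.2⟩ then c.1 else Concept.neg c.1) with hγdef
  have hγ : ∀ (t : Q) (x : D), x ∈ ev (γ t) ↔ τ x = t.1 := by
    intro t x
    rw [hγdef]
    rw [hev, eval_bigConj]
    constructor
    · intro h
      funext s
      have hs := h _ (List.mem_map.mpr ⟨⟨s.1, (hlmem s.1).mpr s.2⟩, List.mem_attach _ _, rfl⟩)
      by_cases hts : t.1 ⟨s.1, (hlmem s.1).mp ((hlmem s.1).mpr s.2)⟩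
      · rw [if_pos hts] at hs
        exact propext (iff_of_true hs hts)
      · rw [if_neg hts] at hs
        exact propext (iff_of_false hs hts)
    · intro hτx c hcmem
      obtain ⟨s, _, rfl⟩ := List.mem_map.mp hcmem
      by_cases hts : t.1 ⟨s.1, (hlmem s.1).mp s.2⟩
      · rw [if_pos hts]
        have : τ x ⟨s.1, (hlmem s.1).mp s.2⟩ := by rw [hτx]; exact hts
        exact this
      · rw [if_neg hts]
        intro hmem
        exact hts (by rw [← hτx]; exact hmem)
  -- minimal representatives of each type
  have hrep : ∀ t : Q, ∃ x, τ x = t.1 ∧ ∀ y, τ y = t.1 → ¬ M.pref y x := by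
    intro t
    obtain ⟨x₀, hx₀⟩ := t.2
    have hne' : (ev (γ t)).Nonempty := ⟨x₀, (hγ t x₀).mpr hx₀⟩
    obtain ⟨x, hx, hmin⟩ := M.smooth (γ t) hne'
    exact ⟨x, (hγ t x).mp hx, fun y hy => hmin y ((hγ t y).mpr hy)⟩
  choose xr hxr hxrmin using hrep
  -- modularity consequences
  have key : ∀ a b z : D, M.pref a b → ¬ M.pref a z → ¬ M.pref z a → M.pref z b := by
    intro a b z hab haz hza
    by_contra hzb
    by_cases hbz : M.pref b z
    · exact haz (M.pref_trans _ _ _ hab hbz)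
    · exact (hModular a z b ⟨haz, hza⟩ ⟨hzb, hbz⟩).1 hab
  have key2 : ∀ a b z : D, M.pref a b → ¬ M.pref b z → ¬ M.pref z b → M.pref a z := by
    intro a b z hab hbz hzb
    by_contra haz
    by_cases hza : M.pref z a
    · exact hzb (M.pref_trans _ _ _ hza hab)
    · exact (hModular a z b ⟨haz, hza⟩ ⟨hzb, hbz⟩).1 hab
  -- the order on types
  set prefQ : Q → Q → Prop := fun t t' => M.pref (xr t) (xr t') with hprefQ
  -- ranking
  set h₀ : Q → ℕ := fun t => (Finset.univ.filter (fun s => prefQ s t)).card with hh₀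
  have h₀iff : ∀ a b : Q, prefQ a b ↔ h₀ a < h₀ b := by
    intro a b
    constructor
    · intro hab
      apply Finset.card_lt_card
      constructor
      · intro s hs
        rw [Finset.mem_filter] at hs ⊢
        exact ⟨hs.1, M.pref_trans _ _ _ hs.2 hab⟩
      · intro hsub
        have := hsub (Finset.mem_filter.mpr ⟨Finset.mem_univ a, hab⟩)
        rw [Finset.mem_filter] at this
        exact M.pref_irrefl _ this.2
    · intro hlt
      by_contra hab
      by_cases hba : prefQ b a
      · have : h₀ b < h₀ a := by
          apply Finset.card_lt_card
          constructor
          · intro s hs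
            rw [Finset.mem_filter] at hs ⊢
            exact ⟨hs.1, M.pref_trans _ _ _ hs.2 hba⟩
          · intro hsub
            have := hsub (Finset.mem_filter.mpr ⟨Finset.mem_univ b, hba⟩)
            rw [Finset.mem_filter] at this
            exact M.pref_irrefl _ this.2
        omega
      · have : h₀ b ≤ h₀ a := by
          apply Finset.card_le_card
          intro s hs
          rw [Finset.mem_filter] at hs ⊢
          exact ⟨hs.1, key2 _ _ _ hs.2 hba hab⟩
        omega
  -- compress the ranking to a convex one
  set V : Finset ℕ := Finset.univ.image h₀ with hV
  have hmemV : ∀ t : Q, h₀ t ∈ V := fun t => Finset.mem_image_of_mem h₀ (Finset.mem_univ t)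
  set e : Fin V.card ≃o ↥V := V.orderIsoOfFin rfl with he
  set g : Q → ℕ := fun t => (e.symm ⟨h₀ t, hmemV t⟩ : Fin V.card).val with hg
  have giff : ∀ a b : Q, h₀ a < h₀ b ↔ g a < g b := by
    intro a b
    rw [hg]
    simp only
    rw [← Fin.lt_iff_val_lt_val, OrderIso.lt_iff_lt, Subtype.mk_lt_mk]
  have gconv : Convex g := by
    intro x j hj
    have hjn : j < V.card := lt_trans hj (e.symm ⟨h₀ x, hmemV x⟩).isLt
    obtain ⟨y, _, hy⟩ := Finset.mem_image.mp (e ⟨j, hjn⟩).2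
    refine ⟨y, ?_⟩
    rw [hg]
    simp only
    have : (⟨h₀ y, hmemV y⟩ : ↥V) = e ⟨j, hjn⟩ := Subtype.ext hy
    rw [this, OrderIso.symm_apply_apply]
  -- the resulting preferential interpretation
  have prefQ_trans : ∀ a b c : Q, prefQ a b → prefQ b c → prefQ a c :=
    fun a b c h1 h2 => M.pref_trans _ _ _ h1 h2
  have prefQ_irrefl : ∀ a : Q, ¬ prefQ a a := fun a => M.pref_irrefl _
  set Pf : PrefInterp C R Q :=
    { toClassInterp := If
      pref := prefQ
      pref_irrefl := prefQ_irrefl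
      pref_trans := prefQ_trans
      smooth := by
        intro c hc
        obtain ⟨t, ht⟩ := hc
        obtain ⟨m, hm, hmmin⟩ := (wellFounded_lt (α := ℕ)).has_min (g '' If.eval c)
          ⟨g t, t, ht, rfl⟩
        obtain ⟨t₀, ht₀, rfl⟩ := hm
        refine ⟨t₀, ht₀, fun y hy hpy => ?_⟩
        exact hmmin (g y) ⟨y, hy, rfl⟩ ((giff _ _).mp ((h₀iff _ _).mp hpy)) } with hPf
  have hQne : Nonempty Q := ⟨⟨τ hne.some, hne.some, rfl⟩⟩
  refine ⟨Q, hQne, inferInstance, Pf, ⟨g, gconv, fun a b => (h₀iff a b).trans (giff a b)⟩, ?_, ?_⟩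
  · -- GCIs
    intro p hp
    have hpG : p ∈ G := Or.inl hp
    obtain ⟨h1, h2⟩ := hmemG p hpG
    intro t ht
    obtain ⟨x, hx⟩ := t.2
    have hx1 := (filt p.1 h1 t x hx).mp ht
    have hx2 : x ∈ ev p.2 := hModel.1 p hp hx1
    exact (filt p.2 h2 t x hx).mpr hx2
  · -- DCIs
    intro p hp
    have hpG : p ∈ G := Or.inr hp
    obtain ⟨h1, h2⟩ := hmemG p hpG
    rintro t ⟨htc, htmin⟩
    have hx : τ (xr t) = t.1 := hxr t
    have hxc : xr t ∈ ev p.1 := (filt p.1 h1 t (xr t) hx).mp htc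
    have hxmin : xr t ∈ minSet M.pref (ev p.1) := by
      refine ⟨hxc, fun y hy hxy => ?_⟩
      set t' : Q := ⟨τ y, y, rfl⟩ with ht'def
      have hymin : ¬ M.pref y (xr t') := hxrmin t' y rfl
      have hprf : M.pref (xr t') (xr t) := by
        by_cases hty : M.pref (xr t') y
        · exact M.pref_trans _ _ _ hty hxy
        · exact key y (xr t) (xr t') hxy hymin hty
      have ht'c : t' ∈ If.eval p.1 := (filt p.1 h1 t' y rfl).mpr hy
      exact htmin t' ht'c hprf
    have := hModel.2 p hp hxmin
    exact (filt p.2 h2 t (xr t) hx).mpr this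

end DefeasibleDL
end

section
/- Finite counter-model property: for every finite defeasible knowledge base K = T ∪ D and all ALC concepts C, D, if K has a modular model that does not satisfy C ⊏∼ D, then K has a ranked model with finite domain that does not satisfy C ⊏∼ D. -/
namespace DefeasibleDL

section Aux
variable {C R : Type}

/-- minimal elements exist in finite nonempty sets under a strict order -/
lemma minSet_nonempty_of_finite {D : Type} (pref : D → D → Prop)
    (hirr : ∀ x, ¬ pref x x) (htr : ∀ x y z, pref x y → pref y z → pref x z) :
    ∀ (n : ℕ) (A : Set D), A.Finite → A.ncard ≤ n → A.Nonempty → (minSet pref A).Nonempty := by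
  intro n
  induction n with
  | zero =>
    intro A hfin hcard hne
    rw [Nat.le_zero, Set.ncard_eq_zero hfin] at hcard
    rcases hne with ⟨x, hx⟩
    simp [hcard] at hx
  | succ n ih =>
    intro A hfin hcard hne
    rcases hne with ⟨x, hx⟩
    by_cases h : ∀ y ∈ A, ¬ pref y x
    · exact ⟨x, hx, h⟩
    · push_neg at h
      obtain ⟨y, hy, hyx⟩ := h
      have hsub : {z | z ∈ A ∧ pref z x} ⊆ A \ {x} := by
        rintro z ⟨hz1, hz2⟩
        refine ⟨hz1, ?_⟩
        rintro rfl
        exact hirr z hz2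
      have hfin' : ({z | z ∈ A ∧ pref z x}).Finite := hfin.subset (fun z hz => hz.1)
      have hcard' : ({z | z ∈ A ∧ pref z x}).ncard ≤ n := by
        have h1 : ({z | z ∈ A ∧ pref z x}).ncard ≤ (A \ {x}).ncard :=
          Set.ncard_le_ncard hsub hfin.diff
        have h2 : (A \ {x}).ncard < A.ncard := Set.ncard_diff_singleton_lt_of_mem hx hfin
        omega
      obtain ⟨z, hz, hzmin⟩ := ih _ hfin' hcard' ⟨y, hy, hyx⟩
      refine ⟨z, hz.1, fun w hw hwz => ?_⟩
      exact hzmin w ⟨hw, htr w z x hwz hz.2⟩ hwz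

/-- conjunction of a list of concepts -/
def listConj : List (Concept C R) → Concept C R
  | [] => .top
  | e :: l => .conj e (listConj l)

lemma eval_listConj {D : Type} (I : ClassInterp C R D) (l : List (Concept C R)) (x : D) :
    x ∈ I.eval (listConj l) ↔ ∀ e ∈ l, x ∈ I.eval e := by
  induction l with
  | nil => simp [listConj, ClassInterp.eval]
  | cons e l ih => simp [listConj, ClassInterp.eval, ih]

/-- subconcepts (including itself) -/
def sub : Concept C R → Set (Concept C R)
  | .top => {.top}
  | .bot => {.bot}
  | .atom a => {.atom a}
  | .neg e => insert (.neg e) (sub e)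
  | .conj a b => insert (.conj a b) (sub a ∪ sub b)
  | .disj a b => insert (.disj a b) (sub a ∪ sub b)
  | .ex r e => insert (.ex r e) (sub e)
  | .all r e => insert (.all r e) (sub e)

lemma sub_self (e : Concept C R) : e ∈ sub e := by
  cases e <;> simp [sub]

lemma sub_finite (e : Concept C R) : (sub e).Finite := by
  induction e with
  | top => simp [sub]
  | bot => simp [sub]
  | atom a => simp [sub]
  | neg e ih => exact (ih.insert _)
  | conj a b iha ihb => exact ((iha.union ihb).insert _)
  | disj a b iha ihb => exact ((iha.union ihb).insert _)
  | ex r e ih => exact (ih.insert _)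
  | all r e ih => exact (ih.insert _)

lemma sub_trans : ∀ e e' : Concept C R, e' ∈ sub e → sub e' ⊆ sub e := by
  intro e
  induction e with
  | top => intro e' h; simp [sub] at h; subst h; exact subset_rfl
  | bot => intro e' h; simp [sub] at h; subst h; exact subset_rfl
  | atom a => intro e' h; simp [sub] at h; subst h; exact subset_rfl
  | neg e ih =>
    intro e' h
    rcases h with h | h
    · subst h; exact subset_rfl
    · exact (ih e' h).trans (Set.subset_insert _ _)
  | conj a b iha ihb =>
    intro e' h
    rcases h with h | h | h
    · subst h; exact subset_rfl
    · exact ((iha e' h).trans (Set.subset_union_left)).trans (Set.subset_insert _ _)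
    · exact ((ihb e' h).trans (Set.subset_union_right)).trans (Set.subset_insert _ _)
  | disj a b iha ihb =>
    intro e' h
    rcases h with h | h | h
    · subst h; exact subset_rfl
    · exact ((iha e' h).trans (Set.subset_union_left)).trans (Set.subset_insert _ _)
    · exact ((ihb e' h).trans (Set.subset_union_right)).trans (Set.subset_insert _ _)
  | ex r e ih =>
    intro e' h
    rcases h with h | h
    · subst h; exact subset_rfl
    · exact (ih e' h).trans (Set.subset_insert _ _)
  | all r e ih =>
    intro e' h
    rcases h with h | h
    · subst h; exact subset_rfl
    · exact (ih e' h).trans (Set.subset_insert _ _)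

/-- closure under subconcepts -/
def SubClosed (S : Set (Concept C R)) : Prop :=
  (∀ e, Concept.neg e ∈ S → e ∈ S) ∧
  (∀ a b, Concept.conj a b ∈ S → a ∈ S ∧ b ∈ S) ∧
  (∀ a b, Concept.disj a b ∈ S → a ∈ S ∧ b ∈ S) ∧
  (∀ (r : R) e, Concept.ex r e ∈ S → e ∈ S) ∧
  (∀ (r : R) e, Concept.all r e ∈ S → e ∈ S)

lemma subClosed_of_sub_subset {S : Set (Concept C R)} (h : ∀ s ∈ S, sub s ⊆ S) :
    SubClosed S := by
  refine ⟨fun e he => h _ he ?_, fun a b hab => ⟨h _ hab ?_, h _ hab ?_⟩,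
    fun a b hab => ⟨h _ hab ?_, h _ hab ?_⟩, fun r e he => h _ he ?_, fun r e he => h _ he ?_⟩ <;>
    simp [sub, sub_self]

end Aux


section Rank
variable {C R D0 : Type} (M : PrefInterp C R D0) (S : Set (Concept C R))

/-- the `S`-type of a domain element -/
def tau (x : D0) : Set (Concept C R) := {s | s ∈ S ∧ x ∈ M.toClassInterp.eval s}

lemma tau_subset (x : D0) : tau M S x ⊆ S := fun _ hs => hs.1

lemma mem_tau_iff {s : Concept C R} (hs : s ∈ S) (x : D0) :
    s ∈ tau M S x ↔ x ∈ M.toClassInterp.eval s := by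
  simp [tau, hs]

open Classical in
/-- a concept whose extension is exactly the elements of type `t` -/
noncomputable def typeConcept (hS : S.Finite) (t : Set (Concept C R)) : Concept C R :=
  listConj (hS.toFinset.toList.map (fun s => if s ∈ t then s else .neg s))

lemma eval_typeConcept (hS : S.Finite) {t : Set (Concept C R)} (ht : t ⊆ S) (x : D0) :
    x ∈ M.toClassInterp.eval (typeConcept S hS t) ↔ tau M S x = t := by
  classical
  rw [typeConcept, eval_listConj]
  constructor
  · intro h
    ext s
    simp only [tau, Set.mem_setOf_eq]
    constructor
    · rintro ⟨hsS, hx⟩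
      by_contra hst
      have := h (Concept.neg s) (by
        simp only [List.mem_map, Set.Finite.mem_toFinset, Finset.mem_toList]
        exact ⟨s, by simpa [Set.Finite.mem_toFinset] using hsS, by simp [hst]⟩)
      simp [ClassInterp.eval] at this
      exact this hx
    · intro hst
      refine ⟨ht hst, ?_⟩
      have := h s (by
        simp only [List.mem_map, Set.Finite.mem_toFinset, Finset.mem_toList]
        exact ⟨s, by simpa [Set.Finite.mem_toFinset] using (ht hst), by simp [hst]⟩)
      exact this
  · rintro rfl e he
    simp only [List.mem_map, Finset.mem_toList, Set.Finite.mem_toFinset] at he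
    obtain ⟨s, hsS, rfl⟩ := he
    by_cases hst : s ∈ tau M S x
    · simpa [hst] using hst.2
    · have : x ∉ M.toClassInterp.eval s := fun hx => hst ⟨hsS, hx⟩
      simpa [hst, ClassInterp.eval] using this

/-- one step of the ranking construction -/
def Tstep (A : Set (Set (Concept C R))) : Set (Set (Concept C R)) :=
  A ∪ {t | ∃ x, tau M S x = t ∧ x ∈ minSet M.pref {y | tau M S y ∉ A}}

/-- the types of rank `< k` -/
def Tlt : ℕ → Set (Set (Concept C R))
  | 0 => ∅
  | k + 1 => Tstep M S (Tlt k)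

lemma Tlt_mono : Monotone (Tlt M S) := by
  have h : ∀ k, Tlt M S k ⊆ Tlt M S (k + 1) := fun k => Set.subset_union_left
  exact monotone_nat_of_le_succ h

lemma Tlt_realized : ∀ k, ∀ t ∈ Tlt M S k, (∃ x, tau M S x = t) ∧ t ⊆ S := by
  intro k
  induction k with
  | zero => intro t ht; simp [Tlt] at ht
  | succ k ih =>
    intro t ht
    rcases ht with ht | ⟨x, rfl, _⟩
    · exact ih t ht
    · exact ⟨⟨x, rfl⟩, tau_subset M S x⟩

/-- the crucial nonemptiness step, using modularity and smoothness -/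
lemma minE_nonempty (hS : S.Finite) (hmod : Modular M.pref) (A : Set (Set (Concept C R)))
    (hne : {y | tau M S y ∉ A}.Nonempty) :
    (minSet M.pref {y | tau M S y ∉ A}).Nonempty := by
  classical
  -- the set of unranked realized types
  set W : Set (Set (Concept C R)) := {t | (∃ x, tau M S x = t) ∧ t ∉ A} with hW
  have hWfin : W.Finite := by
    refine (hS.finite_subsets).subset ?_
    rintro t ⟨⟨x, rfl⟩, _⟩
    exact tau_subset M S x
  -- choose a minimal element of each type class
  have hchoice : ∀ t ∈ W, ∃ w : D0, w ∈ minSet M.pref {y | tau M S y = t} := by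
    rintro t ⟨⟨x, rfl⟩, _⟩
    have h1 : (M.toClassInterp.eval (typeConcept S hS (tau M S x))).Nonempty :=
      ⟨x, (eval_typeConcept M S hS (tau_subset M S x) x).mpr rfl⟩
    obtain ⟨w, hw⟩ := M.smooth _ h1
    refine ⟨w, ?_⟩
    have heq : M.toClassInterp.eval (typeConcept S hS (tau M S x)) = {y | tau M S y = tau M S x} := by
      ext y; exact eval_typeConcept M S hS (tau_subset M S x) y
    rwa [heq] at hw
  obtain ⟨y0, hy0⟩ := hne
  haveI : Nonempty D0 := ⟨y0⟩
  choose! w hw using hchoice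
  set Im : Set D0 := w '' W with hIm
  have hImfin : Im.Finite := hWfin.image w
  have hImne : Im.Nonempty :=
    ⟨w (tau M S y0), ⟨tau M S y0, ⟨⟨y0, rfl⟩, hy0⟩, rfl⟩⟩
  obtain ⟨z, hzIm, hzmin⟩ := minSet_nonempty_of_finite M.pref M.pref_irrefl M.pref_trans
    Im.ncard Im hImfin le_rfl hImne
  obtain ⟨tz, htzW, rfl⟩ := hzIm
  have hz := hw tz htzW
  -- z has type tz
  have hztz : tau M S (w tz) = tz := hz.1
  refine ⟨w tz, ?_, ?_⟩
  · show tau M S (w tz) ∉ A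
    rw [hztz]; exact htzW.2
  · intro y hy hpref
    -- y is an element with unranked type; let u be the chosen witness for y's type
    have hyW : tau M S y ∈ W := ⟨⟨y, rfl⟩, hy⟩
    set u := w (tau M S y) with hu
    have humin := hw _ hyW
    have h1 : ¬ M.pref u (w tz) := hzmin u ⟨tau M S y, hyW, rfl⟩
    have hyu : ¬ M.pref y u := humin.2 y rfl
    have h2 : ¬ M.pref (w tz) u := fun h => hyu (M.pref_trans _ _ _ hpref h)
    have h3 : ¬ M.pref u y := fun h => h1 (M.pref_trans _ _ _ h hpref)
    have := hmod (w tz) u y ⟨h2, h1⟩ ⟨h3, hyu⟩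
    exact this.2 hpref

/-- every realized type eventually gets a rank -/
lemma rank_exists (hS : S.Finite) (hmod : Modular M.pref) (x : D0) :
    ∃ k, tau M S x ∈ Tlt M S (k + 1) := by
  classical
  by_contra hcon
  push_neg at hcon
  have hnot : ∀ k, tau M S x ∉ Tlt M S k := by
    intro k
    cases k with
    | zero => simp [Tlt]
    | succ k => exact hcon k
  have hne : ∀ k, {y | tau M S y ∉ Tlt M S k}.Nonempty := fun k => ⟨x, hnot k⟩
  have hprog : ∀ k, ∃ t, t ∉ Tlt M S k ∧ t ∈ Tlt M S (k + 1) := by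
    intro k
    obtain ⟨z, hz⟩ := minE_nonempty M S hS hmod (Tlt M S k) (hne k)
    exact ⟨tau M S z, hz.1, Or.inr ⟨z, rfl, hz⟩⟩
  have hfin : ∀ k, (Tlt M S k).Finite := by
    intro k
    refine (hS.finite_subsets).subset ?_
    intro t ht
    exact (Tlt_realized M S k t ht).2
  have hcard : ∀ k, k ≤ (Tlt M S k).ncard := by
    intro k
    induction k with
    | zero => simp
    | succ k ih =>
      obtain ⟨t, ht1, ht2⟩ := hprog k
      have hlt : (Tlt M S k).ncard < (Tlt M S (k + 1)).ncard := by
        refine Set.ncard_lt_ncard ?_ (hfin (k + 1))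
        exact ⟨Tlt_mono M S (Nat.le_succ k), fun hsub => ht1 (hsub ht2)⟩
      omega
  have hbound : ∀ k, (Tlt M S k).ncard ≤ {t : Set (Concept C R) | t ⊆ S}.ncard := by
    intro k
    exact Set.ncard_le_ncard (fun t ht => (Tlt_realized M S k t ht).2) hS.finite_subsets
  have := hcard ({t : Set (Concept C R) | t ⊆ S}.ncard + 1)
  have := hbound ({t : Set (Concept C R) | t ⊆ S}.ncard + 1)
  omega

/-- the rank of a type -/
noncomputable def rnk (t : Set (Concept C R)) : ℕ := sInf {k | t ∈ Tlt M S (k + 1)}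

lemma mem_Tlt_iff_rnk {t : Set (Concept C R)} (hex : ∃ k, t ∈ Tlt M S (k + 1)) (k : ℕ) :
    t ∈ Tlt M S k ↔ rnk M S t < k := by
  constructor
  · intro h
    cases k with
    | zero => simp [Tlt] at h
    | succ k => exact Nat.lt_succ_of_le (Nat.sInf_le h)
  · intro h
    have hmem : t ∈ Tlt M S (rnk M S t + 1) := Nat.sInf_mem hex
    exact Tlt_mono M S h hmem

/-- a witness for the rank of a type -/
lemma rnk_witness {t : Set (Concept C R)} (hex : ∃ k, t ∈ Tlt M S (k + 1)) :
    ∃ x, tau M S x = t ∧ x ∈ minSet M.pref {y | tau M S y ∉ Tlt M S (rnk M S t)} := by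
  have hmem : t ∈ Tlt M S (rnk M S t + 1) := Nat.sInf_mem hex
  have hnot : t ∉ Tlt M S (rnk M S t) := by
    rw [mem_Tlt_iff_rnk M S hex]
    omega
  rcases hmem with h | h
  · exact absurd h hnot
  · exact h


/-- key lemma: a type of minimal rank among those containing `p` has a witness
that is minimal in the extension of `p` -/
lemma claim_min (hS : S.Finite) (hmod : Modular M.pref) {p : Concept C R} (hp : p ∈ S)
    {t : Set (Concept C R)} (hex : ∃ k, t ∈ Tlt M S (k + 1)) (hpt : p ∈ t)
    (hmin : ∀ t', (∃ x, tau M S x = t') → p ∈ t' → rnk M S t ≤ rnk M S t') :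
    ∃ x, tau M S x = t ∧ x ∈ minSet M.pref (M.toClassInterp.eval p) := by
  obtain ⟨x, rfl, hxmin⟩ := rnk_witness M S hex
  refine ⟨x, rfl, ?_, ?_⟩
  · exact ((mem_tau_iff M S hp x).mp hpt)
  · intro y hy hpref
    have hpy : p ∈ tau M S y := (mem_tau_iff M S hp y).mpr hy
    have hry : rnk M S (tau M S x) ≤ rnk M S (tau M S y) := hmin _ ⟨y, rfl⟩ hpy
    have hyE : tau M S y ∉ Tlt M S (rnk M S (tau M S x)) := by
      rw [mem_Tlt_iff_rnk M S (rank_exists M S hS hmod y)]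
      omega
    exact hxmin.2 y hyE hpref

/-- key lemma: the type of a minimal element of the extension of `c`
has minimal rank among types containing `c`; uses modularity -/
lemma counter_min (hS : S.Finite) (hmod : Modular M.pref) {c : Concept C R} (hc : c ∈ S)
    {x0 : D0} (hx0 : x0 ∈ minSet M.pref (M.toClassInterp.eval c)) :
    ∀ t', (∃ y, tau M S y = t') → c ∈ t' → rnk M S (tau M S x0) ≤ rnk M S t' := by
  rintro t' ⟨y', rfl⟩ hct'
  by_contra hlt
  push_neg at hlt
  set j := rnk M S (tau M S y') with hj
  obtain ⟨y, hyty, hymin⟩ := rnk_witness M S (rank_exists M S hS hmod y')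
  have hyc : y ∈ M.toClassInterp.eval c := (mem_tau_iff M S hc y).mp (hyty ▸ hct')
  have hx0E : x0 ∈ {z | tau M S z ∉ Tlt M S j} := by
    show tau M S x0 ∉ Tlt M S j
    rw [mem_Tlt_iff_rnk M S (rank_exists M S hS hmod x0)]
    omega
  have hx0notmin : x0 ∉ minSet M.pref {z | tau M S z ∉ Tlt M S j} := by
    intro hmem
    have h5 : tau M S x0 ∈ Tlt M S (j + 1) := Or.inr ⟨x0, rfl, hmem⟩
    have h6 : rnk M S (tau M S x0) ≤ j :=
      Nat.sInf_le (show j ∈ {k | tau M S x0 ∈ Tlt M S (k + 1)} from h5)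
    omega
  have hz : ∃ z, tau M S z ∉ Tlt M S j ∧ M.pref z x0 := by
    by_contra hcon
    push_neg at hcon
    exact hx0notmin ⟨hx0E, fun z hzE => hcon z hzE⟩
  obtain ⟨z, hzE, hzx0⟩ := hz
  have hyx0 : ¬ M.pref y x0 := hx0.2 y hyc
  have h1 : ¬ M.pref z y := hymin.2 z hzE
  have h2 : ¬ M.pref y z := fun h => hyx0 (M.pref_trans _ _ _ h hzx0)
  have h3 : ¬ M.pref x0 y := fun h => h1 (M.pref_trans _ _ _ hzx0 h)
  have := hmod x0 y z ⟨h3, hyx0⟩ ⟨h2, h1⟩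
  exact this.2 hzx0

/-- the set of realized types -/
def Types : Set (Set (Concept C R)) := {t | ∃ x, tau M S x = t}

lemma Types_finite (hS : S.Finite) : (Types M S).Finite :=
  hS.finite_subsets.subset (by rintro t ⟨x, rfl⟩; exact tau_subset M S x)

/-- edges of the filtrated interpretation -/
def edge (r : R) (t t' : Set (Concept C R)) : Prop :=
  (∀ e, Concept.all r e ∈ S → Concept.all r e ∈ t → e ∈ t') ∧
  (∀ e, Concept.ex r e ∈ S → e ∈ t' → Concept.ex r e ∈ t)

lemma edge_of_rel (hcl : SubClosed S) {r : R} {x y : D0}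
    (hr : M.toClassInterp.interpR r x y) : edge S r (tau M S x) (tau M S y) := by
  constructor
  · intro e heS het
    have heS' : e ∈ S := hcl.2.2.2.2 r e heS
    have hx : x ∈ M.toClassInterp.eval (Concept.all r e) := (mem_tau_iff M S heS x).mp het
    exact (mem_tau_iff M S heS' y).mpr (hx y hr)
  · intro e heS hety
    have heS' : e ∈ S := hcl.2.2.2.1 r e heS
    have hy : y ∈ M.toClassInterp.eval e := (mem_tau_iff M S heS' y).mp hety
    exact (mem_tau_iff M S heS x).mpr ⟨y, hr, hy⟩

/-- the filtrated classical interpretation -/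
def FInterp : ClassInterp C R (Types M S) where
  interpC := fun a => {t | Concept.atom a ∈ t.val}
  interpR := fun r t t' => edge S r t.val t'.val

/-- the truth lemma for the filtration -/
lemma truth_lemma (hcl : SubClosed S) :
    ∀ s : Concept C R, s ∈ S → ∀ t : Types M S,
      t ∈ (FInterp M S).eval s ↔ s ∈ t.val := by
  intro s
  induction s with
  | top =>
    intro hs t
    obtain ⟨x, hx⟩ := t.2
    simp only [ClassInterp.eval, Set.mem_univ, true_iff]
    rw [← hx]
    exact (mem_tau_iff M S hs x).mpr trivial
  | bot =>
    intro hs t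
    obtain ⟨x, hx⟩ := t.2
    simp only [ClassInterp.eval]
    constructor
    · intro h; exact absurd h (Set.notMem_empty _)
    · intro h
      rw [← hx] at h
      exact absurd ((mem_tau_iff M S hs x).mp h) (Set.notMem_empty _)
  | atom a =>
    intro hs t
    exact Iff.rfl
  | neg e ih =>
    intro hs t
    obtain ⟨x, hx⟩ := t.2
    have heS : e ∈ S := hcl.1 e hs
    have := ih heS t
    simp only [ClassInterp.eval, Set.mem_compl_iff, this]
    rw [← hx, mem_tau_iff M S hs x, mem_tau_iff M S heS x]
    simp [ClassInterp.eval]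
  | conj a b iha ihb =>
    intro hs t
    obtain ⟨x, hx⟩ := t.2
    have haS : a ∈ S := (hcl.2.1 a b hs).1
    have hbS : b ∈ S := (hcl.2.1 a b hs).2
    simp only [ClassInterp.eval, Set.mem_inter_iff, iha haS t, ihb hbS t]
    rw [← hx, mem_tau_iff M S hs x, mem_tau_iff M S haS x, mem_tau_iff M S hbS x]
    simp [ClassInterp.eval]
  | disj a b iha ihb =>
    intro hs t
    obtain ⟨x, hx⟩ := t.2
    have haS : a ∈ S := (hcl.2.2.1 a b hs).1
    have hbS : b ∈ S := (hcl.2.2.1 a b hs).2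
    simp only [ClassInterp.eval, Set.mem_union, iha haS t, ihb hbS t]
    rw [← hx, mem_tau_iff M S hs x, mem_tau_iff M S haS x, mem_tau_iff M S hbS x]
    simp [ClassInterp.eval]
  | ex r e ih =>
    intro hs t
    have heS : e ∈ S := hcl.2.2.2.1 r e hs
    constructor
    · rintro ⟨t', hedge, ht'⟩
      have het' : e ∈ t'.val := (ih heS t').mp ht'
      exact hedge.2 e hs het'
    · intro het
      obtain ⟨x, hx⟩ := t.2
      have hxe : x ∈ M.toClassInterp.eval (Concept.ex r e) := by
        rw [← hx] at het; exact (mem_tau_iff M S hs x).mp het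
      obtain ⟨y, hr, hy⟩ := hxe
      refine ⟨⟨tau M S y, y, rfl⟩, ?_, ?_⟩
      · show edge S r t.val (tau M S y)
        rw [← hx]
        exact edge_of_rel M S hcl hr
      · exact (ih heS _).mpr ((mem_tau_iff M S heS y).mpr hy)
  | all r e ih =>
    intro hs t
    have heS : e ∈ S := hcl.2.2.2.2 r e hs
    constructor
    · intro h
      obtain ⟨x, hx⟩ := t.2
      rw [← hx]
      refine (mem_tau_iff M S hs x).mpr ?_
      intro y hr
      have hedge : edge S r t.val (tau M S y) := by
        rw [← hx]; exact edge_of_rel M S hcl hr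
      have := h ⟨tau M S y, y, rfl⟩ hedge
      exact (mem_tau_iff M S heS y).mp ((ih heS _).mp this)
    · intro het t' hedge
      exact (ih heS t').mpr (hedge.1 e hs het)

end Rank

/-- finite counter-model property: if `K` has a modular model not
satisfying `c ⊏∼ d`, then `K` has a ranked model with finite domain not
satisfying `c ⊏∼ d`. -/
theorem finite_counter_model_property {C R : Type} [Finite C] [Finite R]
    (K : KB C R) (c d : Concept C R)
    (hmod : ∃ (D : Type) (_ : Nonempty D) (M : PrefInterp C R D),
      Modular M.pref ∧ M.isModel K ∧ ¬ M.satDCI c d) :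
    ∃ (D : Type) (_ : Nonempty D) (_ : Finite D) (M : PrefInterp C R D),
      IsRanked M.pref ∧ M.isModel K ∧ ¬ M.satDCI c d := by
  classical
  obtain ⟨D0, hne0, M, hmod, hKmod, hcex⟩ := hmod
  -- the finite, subconcept-closed signature
  set G : Set (Concept C R) := {c, d} ∪ (Prod.fst '' K.tbox) ∪ (Prod.snd '' K.tbox) ∪
    (Prod.fst '' K.dbox) ∪ (Prod.snd '' K.dbox) with hG
  set S : Set (Concept C R) := ⋃ e ∈ G, sub e with hSdef
  have hGfin : G.Finite :=
    (((((Set.finite_singleton d).insert c).union (K.tbox_finite.image _)).union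
      (K.tbox_finite.image _)).union (K.dbox_finite.image _)).union (K.dbox_finite.image _)
  have hS : S.Finite := hGfin.biUnion (fun e _ => sub_finite e)
  have hGS : ∀ e ∈ G, e ∈ S := fun e he => Set.mem_biUnion he (sub_self e)
  have hcl : SubClosed S := by
    refine subClosed_of_sub_subset ?_
    intro s hs
    rw [hSdef] at hs
    simp only [Set.mem_iUnion] at hs
    obtain ⟨g, hg, hsg⟩ := hs
    intro u hu
    rw [hSdef]
    simp only [Set.mem_iUnion]
    exact ⟨g, hg, sub_trans g s hsg hu⟩
  have hcG : c ∈ G := by simp [hG]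
  have hdG : d ∈ G := by simp [hG]
  have hc : c ∈ S := hGS c hcG
  have hd : d ∈ S := hGS d hdG
  have htb : ∀ p ∈ K.tbox, p.1 ∈ S ∧ p.2 ∈ S := by
    intro p hp
    constructor
    · exact hGS _ (by simp only [hG]; left; left; left; right; exact ⟨p, hp, rfl⟩)
    · exact hGS _ (by simp only [hG]; left; left; right; exact ⟨p, hp, rfl⟩)
  have hdb : ∀ p ∈ K.dbox, p.1 ∈ S ∧ p.2 ∈ S := by
    intro p hp
    constructor
    · exact hGS _ (by simp only [hG]; left; right; exact ⟨p, hp, rfl⟩)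
    · exact hGS _ (by simp only [hG]; right; exact ⟨p, hp, rfl⟩)
  -- the counterexample element
  rw [PrefInterp.satDCI, Set.not_subset] at hcex
  obtain ⟨x0, hx0min, hx0d⟩ := hcex
  haveI hfinDom : Finite ↥(Types M S) := (Types_finite M S hS).to_subtype
  -- existence of ranks
  have hex : ∀ t : Types M S, ∃ k, t.val ∈ Tlt M S (k + 1) := by
    rintro ⟨t, x, rfl⟩
    exact rank_exists M S hS hmod x
  refine ⟨↥(Types M S), ⟨⟨tau M S x0, x0, rfl⟩⟩, hfinDom,
    { toClassInterp := FInterp M S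
      pref := fun t t' => rnk M S t.val < rnk M S t'.val
      pref_irrefl := fun t => lt_irrefl _
      pref_trans := fun _ _ _ h1 h2 => lt_trans h1 h2
      smooth := fun e hne =>
        minSet_nonempty_of_finite
          (fun (t t' : ↥(Types M S)) => rnk M S t.val < rnk M S t'.val) (fun t => lt_irrefl _)
          (fun _ _ _ h1 h2 => lt_trans h1 h2) _ _ (Set.toFinite _) le_rfl hne },
    ⟨fun t => rnk M S t.val, ?_, fun _ _ => Iff.rfl⟩, ⟨?_, ?_⟩, ?_⟩
  · -- convexity
    intro t j hj
    have hj' : j < rnk M S t.val := hj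
    obtain ⟨x, hx⟩ := t.2
    have hxE : tau M S x ∉ Tlt M S j := by
      rw [mem_Tlt_iff_rnk M S (rank_exists M S hS hmod x), hx]
      omega
    obtain ⟨z, hz⟩ := minE_nonempty M S hS hmod (Tlt M S j) ⟨x, hxE⟩
    have h1 : tau M S z ∈ Tlt M S (j + 1) := Or.inr ⟨z, rfl, hz⟩
    have hle : rnk M S (tau M S z) ≤ j :=
      Nat.sInf_le (show j ∈ {k | tau M S z ∈ Tlt M S (k + 1)} from h1)
    have hge : ¬ rnk M S (tau M S z) < j := by
      intro hlt
      exact hz.1 ((mem_Tlt_iff_rnk M S (rank_exists M S hS hmod z) j).mpr hlt)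
    refine ⟨⟨tau M S z, z, rfl⟩, ?_⟩
    show rnk M S (tau M S z) = j
    omega
  · -- GCIs
    intro p hp
    intro t ht
    have hp1S : p.1 ∈ S := (htb p hp).1
    have hp2S : p.2 ∈ S := (htb p hp).2
    have hp1t : p.1 ∈ t.val := (truth_lemma M S hcl p.1 hp1S t).mp ht
    obtain ⟨x, hx⟩ := t.2
    have hx1 : x ∈ M.toClassInterp.eval p.1 := by
      rw [← hx] at hp1t
      exact (mem_tau_iff M S hp1S x).mp hp1t
    have hx2 : x ∈ M.toClassInterp.eval p.2 := hKmod.1 p hp hx1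
    refine (truth_lemma M S hcl p.2 hp2S t).mpr ?_
    rw [← hx]
    exact (mem_tau_iff M S hp2S x).mpr hx2
  · -- DCIs
    intro p hp
    rintro t ⟨ht1, ht2⟩
    have hp1S : p.1 ∈ S := (hdb p hp).1
    have hp2S : p.2 ∈ S := (hdb p hp).2
    have hp1t : p.1 ∈ t.val := (truth_lemma M S hcl p.1 hp1S t).mp ht1
    have hminr : ∀ t'', (∃ x, tau M S x = t'') → p.1 ∈ t'' → rnk M S t.val ≤ rnk M S t'' := by
      intro t'' ht''r hp1t''
      have hmem : (⟨t'', ht''r⟩ : Types M S) ∈ (FInterp M S).eval p.1 :=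
        (truth_lemma M S hcl p.1 hp1S ⟨t'', ht''r⟩).mpr hp1t''
      have h7 : ¬ rnk M S t'' < rnk M S t.val := ht2 _ hmem
      omega
    have hext : ∃ k, t.val ∈ Tlt M S (k + 1) := hex t
    obtain ⟨x, hx, hxmin⟩ := claim_min M S hS hmod hp1S hext hp1t hminr
    have hx2 : x ∈ M.toClassInterp.eval p.2 := hKmod.2 p hp hxmin
    refine (truth_lemma M S hcl p.2 hp2S t).mpr ?_
    rw [← hx]
    exact (mem_tau_iff M S hp2S x).mpr hx2
  · -- the counterexample survives
    rw [PrefInterp.satDCI, Set.not_subset]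
    refine ⟨⟨tau M S x0, x0, rfl⟩, ⟨?_, ?_⟩, ?_⟩
    · exact (truth_lemma M S hcl c hc _).mpr ((mem_tau_iff M S hc x0).mpr hx0min.1)
    · intro t' ht'c
      have hct' : c ∈ t'.val := (truth_lemma M S hcl c hc t').mp ht'c
      have h8 := counter_min M S hS hmod hc hx0min t'.val t'.2 hct'
      show ¬ rnk M S t'.val < rnk M S (tau M S x0)
      omega
    · intro hmem
      have hd0 : d ∈ tau M S x0 := (truth_lemma M S hcl d hd _).mp hmem
      exact hx0d ((mem_tau_iff M S hd x0).mp hd0)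

end DefeasibleDL
end

section
/- Fix a countably infinite set Δ and let Mod_Δ(K) be the set of ranked models of K whose domain is Δ. For every defeasible knowledge base K and all ALC concepts C and D: K modularly entails C ⊏∼ D (i.e. every modular model of K satisfies C ⊏∼ D) if and only if every interpretation in Mod_Δ(K) satisfies C ⊏∼ D. -/
namespace DefeasibleDL

/-! ### Auxiliary material -/

section Aux

variable {C R : Type}

private def enc (fC : C → ℕ) (fR : R → ℕ) : Concept C R → ℕ
  | .top => Nat.pair 0 0
  | .bot => Nat.pair 1 0
  | .atom a => Nat.pair 2 (fC a)
  | .neg c => Nat.pair 3 (enc fC fR c)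
  | .conj c d => Nat.pair 4 (Nat.pair (enc fC fR c) (enc fC fR d))
  | .disj c d => Nat.pair 5 (Nat.pair (enc fC fR c) (enc fC fR d))
  | .ex r c => Nat.pair 6 (Nat.pair (fR r) (enc fC fR c))
  | .all r c => Nat.pair 7 (Nat.pair (fR r) (enc fC fR c))

set_option linter.unnecessarySeqFocus false in
private theorem enc_inj {fC : C → ℕ} {fR : R → ℕ} (hC : Function.Injective fC)
    (hR : Function.Injective fR) : ∀ x y : Concept C R, enc fC fR x = enc fC fR y → x = y := by
  intro x
  induction x with
  | top => intro y h; cases y <;> simp [enc, Nat.pair_eq_pair] at h <;> rfl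
  | bot => intro y h; cases y <;> simp [enc, Nat.pair_eq_pair] at h <;> rfl
  | atom a =>
    intro y h; cases y <;> simp [enc, Nat.pair_eq_pair] at h
    rw [hC h]
  | neg c ih =>
    intro y h; cases y <;> simp [enc, Nat.pair_eq_pair] at h
    rw [ih _ h]
  | conj c d ih1 ih2 =>
    intro y h; cases y <;> simp [enc, Nat.pair_eq_pair] at h
    rw [ih1 _ h.1, ih2 _ h.2]
  | disj c d ih1 ih2 =>
    intro y h; cases y <;> simp [enc, Nat.pair_eq_pair] at h
    rw [ih1 _ h.1, ih2 _ h.2]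
  | ex r c ih =>
    intro y h; cases y <;> simp [enc, Nat.pair_eq_pair] at h
    rw [hR h.1, ih _ h.2]
  | all r c ih =>
    intro y h; cases y <;> simp [enc, Nat.pair_eq_pair] at h
    rw [hR h.1, ih _ h.2]

instance conceptCountable [Countable C] [Countable R] : Countable (Concept C R) := by
  obtain ⟨fC, hC⟩ := exists_injective_nat C
  obtain ⟨fR, hR⟩ := exists_injective_nat R
  exact (countable_iff_exists_injective _).mpr ⟨enc fC fR, fun x y h => enc_inj hC hR x y h⟩

/-- Collapsing an arbitrary `ℕ`-valued rank function to a convex one inducing the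
same strict order. -/
private theorem collapse {D : Type} (H : D → ℕ) :
    ∃ h : D → ℕ, Convex h ∧ ∀ u v : D, (H u < H v ↔ h u < h v) := by
  classical
  set A : D → Set ℕ := fun u => {j | (∃ z, H z = j) ∧ j < H u} with hA
  have hfin : ∀ u, (A u).Finite := fun u =>
    (Set.finite_Iio (H u)).subset (fun j hj => hj.2)
  set h : D → ℕ := fun u => (A u).ncard with hh
  have hmono : ∀ u v : D, H u ≤ H v → h u ≤ h v := by
    intro u v huv
    exact Set.ncard_le_ncard (fun j hj => ⟨hj.1, lt_of_lt_of_le hj.2 huv⟩) (hfin v)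
  have hstrict : ∀ u v : D, H u < H v → h u < h v := by
    intro u v huv
    refine Set.ncard_lt_ncard ⟨fun j hj => ⟨hj.1, hj.2.trans huv⟩, ?_⟩ (hfin v)
    intro hsub
    exact absurd ((hsub ⟨⟨u, rfl⟩, huv⟩).2) (lt_irrefl _)
  have hiff : ∀ u v : D, H u < H v ↔ h u < h v := by
    intro u v
    constructor
    · exact hstrict u v
    · intro hlt
      by_contra hc
      exact absurd (hmono v u (not_lt.mp hc)) (not_le.mpr hlt)
  refine ⟨h, ?_, hiff⟩
  have key : ∀ n : ℕ, ∀ x : D, H x = n → ∀ j : ℕ, j < h x → ∃ y : D, h y = j := by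
    intro n
    induction n using Nat.strong_induction_on with
    | _ n ih =>
      intro x hx j hj
      have hne : (A x).Nonempty := by
        rw [Set.nonempty_iff_ne_empty]
        intro he
        rw [hh] at hj
        simp only [he, Set.ncard_empty] at hj
        omega
      obtain ⟨i₀, hi₀mem, hi₀max⟩ : ∃ i₀ ∈ A x, ∀ i ∈ A x, i ≤ i₀ := by
        obtain ⟨i₀, hmem, hmax⟩ := Set.exists_max_image (A x) id (hfin x) hne
        exact ⟨i₀, hmem, hmax⟩
      obtain ⟨⟨z₀, hz₀⟩, hi₀lt⟩ := hi₀mem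
      have hAz : A z₀ = A x \ {i₀} := by
        ext j'
        constructor
        · rintro ⟨hw, hlt⟩
          rw [hz₀] at hlt
          exact ⟨⟨hw, hlt.trans hi₀lt⟩, by simp; omega⟩
        · rintro ⟨⟨hw, hlt⟩, hne'⟩
          have : j' ≤ i₀ := hi₀max _ ⟨hw, hlt⟩
          simp at hne'
          exact ⟨hw, by rw [hz₀]; omega⟩
      have hhz : h z₀ = h x - 1 := by
        rw [hh]
        simp only
        rw [hAz, Set.ncard_diff_singleton_of_mem
          (show i₀ ∈ A x from ⟨⟨z₀, hz₀⟩, hi₀lt⟩)]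
      rcases Nat.lt_or_ge j (h x - 1) with hlt | hge
      · exact ih (H z₀) (by omega) z₀ rfl j (by omega)
      · exact ⟨z₀, by omega⟩
  exact fun x j hj => key (H x) x rfl j hj

/-- Inductive stages of a closure of a base set under a `step` operation. -/
private def stage {D : Type} (base : Set D) (step : D → Set D) : ℕ → Set D
  | 0 => base
  | n + 1 => stage base step n ∪ ⋃ u ∈ stage base step n, step u

private theorem stage_countable {D : Type} {base : Set D} {step : D → Set D}
    (hb : base.Countable) (hs : ∀ u, (step u).Countable) :
    ∀ n, (stage base step n).Countable := by
  intro n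
  induction n with
  | zero => exact hb
  | succ n ih => exact ih.union (Set.Countable.biUnion ih (fun u _ => hs u))

private theorem stage_closed {D : Type} {base : Set D} {step : D → Set D} {u v : D} {n : ℕ}
    (hu : u ∈ stage base step n) (hv : v ∈ step u) : v ∈ stage base step (n + 1) :=
  Or.inr (Set.mem_biUnion hu hv)

/-- Membership unfolding helpers. -/
private theorem mem_eval_ex {C R D : Type} (I : ClassInterp C R D) (r : R) (e : Concept C R)
    (u : D) : u ∈ I.eval (.ex r e) ↔ ∃ y, I.interpR r u y ∧ y ∈ I.eval e := Iff.rfl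

private theorem mem_eval_all {C R D : Type} (I : ClassInterp C R D) (r : R) (e : Concept C R)
    (u : D) : u ∈ I.eval (.all r e) ↔ ∀ y, I.interpR r u y → y ∈ I.eval e := Iff.rfl

private theorem mem_eval_neg {C R D : Type} (I : ClassInterp C R D) (e : Concept C R)
    (u : D) : u ∈ I.eval (.neg e) ↔ u ∉ I.eval e := Iff.rfl

private theorem not_mem_ex {C R D : Type} (I : ClassInterp C R D) (r : R) (e : Concept C R)
    (u : D) : u ∉ I.eval (.ex r e) ↔ u ∈ I.eval (.all r (.neg e)) := by
  rw [mem_eval_ex, mem_eval_all]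
  push_neg
  exact Iff.rfl

/-- The generic truth lemma for the pulled-back canonical interpretation. -/
private theorem truth_lemma_s14 {C R D E : Type} (I : ClassInterp C R D) (ψ : E → D)
    (hwit : ∀ (w : E) (r : R) (e : Concept C R), ψ w ∈ I.eval (.ex r e) →
      ∃ w' : E, I.interpR r (ψ w) (ψ w') ∧ ψ w' ∈ I.eval e) :
    ∀ (e : Concept C R) (w : E),
      w ∈ (ClassInterp.mk (fun a => {v | ψ v ∈ I.interpC a})
        (fun r v v' => ∀ e', ψ v ∈ I.eval (.all r e') → ψ v' ∈ I.eval e') : ClassInterp C R E).eval e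
      ↔ ψ w ∈ I.eval e := by
  set J : ClassInterp C R E := ClassInterp.mk (fun a => {v | ψ v ∈ I.interpC a})
    (fun r v v' => ∀ e', ψ v ∈ I.eval (.all r e') → ψ v' ∈ I.eval e') with hJ
  intro e
  induction e with
  | top => intro w; exact Iff.rfl
  | bot => intro w; exact Iff.rfl
  | atom a => intro w; exact Iff.rfl
  | neg e ih => intro w; exact not_congr (ih w)
  | conj e1 e2 ih1 ih2 => intro w; exact and_congr (ih1 w) (ih2 w)
  | disj e1 e2 ih1 ih2 => intro w; exact or_congr (ih1 w) (ih2 w)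
  | ex r e ih =>
    intro w
    constructor
    · rintro ⟨w', hRw, hw'⟩
      have hw'e : ψ w' ∈ I.eval e := (ih w').mp hw'
      by_contra hcon
      have hall : ψ w ∈ I.eval (.all r (.neg e)) := (not_mem_ex I r e _).mp hcon
      exact (hRw (.neg e) hall) hw'e
    · intro hw
      obtain ⟨w', hR, hw'⟩ := hwit w r e hw
      refine ⟨w', ?_, (ih w').mpr hw'⟩
      intro e' he'
      exact he' _ hR
  | all r e ih =>
    intro w
    constructor
    · intro hall
      by_contra hcon
      have hexn : ψ w ∈ I.eval (.ex r (.neg e)) := by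
        rw [mem_eval_ex]
        rw [mem_eval_all] at hcon
        push_neg at hcon
        obtain ⟨y, hy1, hy2⟩ := hcon
        exact ⟨y, hy1, hy2⟩
      obtain ⟨w', hR, hw'⟩ := hwit w r (.neg e) hexn
      have hR3 : J.interpR r w w' := fun e' he' => he' _ hR
      exact hw' ((ih w').mp (hall w' hR3))
    · intro hw w' hR3
      exact (ih w').mpr (hR3 e hw)

end Aux

/-- for a fixed countably infinite domain `Δ`, modular entailment of a
DCI from `K` coincides with truth in all ranked models of `K` with domain `Δ`. -/
theorem modEntails_iff_all_ranked_models_on {C R : Type} [Finite C] [Finite R]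
    (Δ : Type) [Countable Δ] [Infinite Δ] (K : KB C R) (c d : Concept C R) :
    modEntails K (Stmt.dci c d) ↔
      ∀ M : PrefInterp C R Δ, IsRanked M.pref → M.isModel K → M.satDCI c d := by
  classical
  constructor
  · -- modular entailment implies truth in all ranked models on Δ
    intro hmod M hrank hM
    have hModular : Modular M.pref := by
      obtain ⟨h, _, hiff⟩ := hrank
      intro a b e h1 h2
      obtain ⟨h11, h12⟩ := h1
      obtain ⟨h21, h22⟩ := h2
      rw [hiff] at h11 h12 h21 h22
      constructor <;> rw [hiff] <;> omega
    exact hmod Δ inferInstance M hModular hM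
  · -- truth in all ranked models on Δ implies modular entailment
    intro hΔ D hne P hModular hK
    show P.satDCI c d
    by_contra hvio
    obtain ⟨x, hxmin, hxd⟩ := Set.not_subset.mp hvio
    set ev : Concept C R → Set D := P.toClassInterp.eval with hev
    -- the finite set of relevant antecedent concepts
    set G : Set (Concept C R) := insert c (Prod.fst '' K.dbox) with hG
    have hGfin : G.Finite := ((K.dbox_finite.image Prod.fst).insert c)
    -- ranking function from the modular order
    set Below : D → Set (Concept C R) :=
      fun y => {g | g ∈ G ∧ ∃ z ∈ minSet P.pref (ev g), P.pref z y} with hBelow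
    have hBelowG : ∀ y, Below y ⊆ G := fun y g hg => hg.1
    have hBelowFin : ∀ y, (Below y).Finite := fun y => hGfin.subset (hBelowG y)
    set H : D → ℕ := fun y => (Below y).ncard with hH
    -- Lemma A : minimal elements have `Below`-least rank on the extension
    have lemA : ∀ g ∈ G, ∀ y ∈ minSet P.pref (ev g), ∀ v ∈ ev g, Below y ⊆ Below v := by
      intro g hg y hy v hv g' hg'
      obtain ⟨hg'G, z, hz, hzy⟩ := hg'
      refine ⟨hg'G, z, hz, ?_⟩
      by_cases h1 : P.pref z v
      · exact h1
      exfalso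
      by_cases h2 : P.pref v z
      · exact hy.2 v hv (P.pref_trans v z y h2 hzy)
      by_cases h3 : P.pref v y
      · exact hy.2 v hv h3
      by_cases h4 : P.pref y v
      · exact h1 (P.pref_trans z y v hzy h4)
      exact (hModular z v y ⟨h1, h2⟩ ⟨h3, h4⟩).1 hzy
    have lemAle : ∀ g ∈ G, ∀ y ∈ minSet P.pref (ev g), ∀ v ∈ ev g, H y ≤ H v := by
      intro g hg y hy v hv
      exact Set.ncard_le_ncard (lemA g hg y hy v hv) (hBelowFin v)
    -- Lemma B : `H`-minimal elements of the extension of a relevant concept are minimal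
    have lemB : ∀ g ∈ G, ∀ y ∈ ev g, (∀ v ∈ ev g, ¬ H v < H y) → y ∈ minSet P.pref (ev g) := by
      intro g hg y hyg hmin
      by_contra hnot
      have hex : ∃ w ∈ ev g, P.pref w y := by
        by_contra hno
        push_neg at hno
        exact hnot ⟨hyg, hno⟩
      obtain ⟨w, hw, hwy⟩ := hex
      obtain ⟨z, hz⟩ := P.smooth g ⟨y, hyg⟩
      have hzy : P.pref z y := by
        by_contra h1
        have h2 : ¬ P.pref y z := hz.2 y hyg
        have hw1 : ¬ P.pref w z := hz.2 w hw
        have hw2 : ¬ P.pref z w := fun h => h1 (P.pref_trans z w y h hwy)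
        exact (hModular w z y ⟨hw1, hw2⟩ ⟨h1, h2⟩).1 hwy
      have hsub : Below z ⊂ Below y := by
        constructor
        · exact lemA g hg z hz y hyg
        · intro hsub'
          have hgin : g ∈ Below y := ⟨hg, z, hz, hzy⟩
          obtain ⟨_, z', hz', hz'z⟩ := hsub' hgin
          exact hz.2 z' hz'.1 hz'z
      exact hmin z hz.1 (Set.ncard_lt_ncard hsub (hBelowFin y))
    -- basic facts about the counterexample and the DCIs wrt H
    have hcG : c ∈ G := Set.mem_insert _ _
    have hx_minH : ∀ v ∈ ev c, ¬ H v < H x := by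
      intro v hv
      exact not_lt.mpr (lemAle c hcG x hxmin v hv)
    have hxc : x ∈ ev c := hxmin.1
    have hdci_H : ∀ p ∈ K.dbox, ∀ y ∈ ev p.1, (∀ v ∈ ev p.1, ¬ H v < H y) → y ∈ ev p.2 := by
      intro p hp y hy hmin
      have hpG : p.1 ∈ G := Set.mem_insert_of_mem _ ⟨p, hp, rfl⟩
      exact hK.2 p hp (lemB p.1 hpG y hy hmin)
    -- witnesses for existential concepts
    have hwit : ∀ (u : D) (r : R) (e : Concept C R), ∃ v : D,
        u ∈ ev (.ex r e) → (P.interpR r u v ∧ v ∈ ev e) := by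
      intro u r e
      by_cases h : u ∈ ev (.ex r e)
      · obtain ⟨v, hv⟩ := h
        exact ⟨v, fun _ => hv⟩
      · exact ⟨Classical.arbitrary D, fun h' => absurd h' h⟩
    choose wit hwitp using hwit
    -- H-least elements of nonempty extensions
    have hzf : ∀ e : Concept C R, ∃ z : D,
        (ev e).Nonempty → (z ∈ ev e ∧ ∀ v ∈ ev e, ¬ H v < H z) := by
      intro e
      by_cases h : (ev e).Nonempty
      · obtain ⟨z, hz1, hz2⟩ := (InvImage.wf H Nat.lt_wfRel.wf).has_min (ev e) h
        exact ⟨z, fun _ => ⟨hz1, hz2⟩⟩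
      · exact ⟨Classical.arbitrary D, fun h' => absurd h' h⟩
    choose zf hzfp using hzf
    -- the countable subdomain
    set base : Set D := {x} ∪ Set.range zf with hbase
    set step : D → Set D :=
      fun u => Set.range (fun p : R × Concept C R => wit u p.1 p.2) with hstep
    set T : Set D := ⋃ n, stage base step n with hT
    have hTcnt : T.Countable :=
      Set.countable_iUnion (stage_countable
        ((Set.countable_singleton x).union (Set.countable_range zf)) (fun u => Set.countable_range _))
    have hxT : x ∈ T := Set.mem_iUnion.mpr ⟨0, Or.inl rfl⟩
    have hzT : ∀ e, zf e ∈ T := fun e => Set.mem_iUnion.mpr ⟨0, Or.inr ⟨e, rfl⟩⟩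
    have hwitT : ∀ u ∈ T, ∀ (r : R) (e : Concept C R), wit u r e ∈ T := by
      intro u hu r e
      obtain ⟨n, hn⟩ := Set.mem_iUnion.mp hu
      exact Set.mem_iUnion.mpr ⟨n + 1, stage_closed hn ⟨(r, e), rfl⟩⟩
    -- the surjection from Δ onto T
    obtain ⟨f, hf⟩ := hTcnt.exists_eq_range ⟨x, hxT⟩
    have hσ : Function.Surjective (Function.invFun (Infinite.natEmbedding Δ)) :=
      Function.invFun_surjective (Infinite.natEmbedding Δ).injective
    set ψ : Δ → D := f ∘ (Function.invFun (Infinite.natEmbedding Δ)) with hψ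
    have hrange : Set.range ψ = T := by
      rw [hψ, Set.range_comp, Set.range_eq_univ.mpr hσ, Set.image_univ, ← hf]
    have hψT : ∀ w, ψ w ∈ T := fun w => hrange ▸ Set.mem_range_self w
    have hmemT : ∀ u ∈ T, ∃ w, ψ w = u := by
      intro u hu
      rw [← hrange] at hu
      exact hu
    have hwitψ : ∀ (w : Δ) (r : R) (e : Concept C R), ∃ w', ψ w' = wit (ψ w) r e :=
      fun w r e => hmemT _ (hwitT _ (hψT w) r e)
    -- the ranked model on Δ
    set M3 : PrefInterp C R Δ :=
      { interpC := fun a => {w | ψ w ∈ P.interpC a}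
        interpR := fun r w w' => ∀ e : Concept C R, ψ w ∈ ev (.all r e) → ψ w' ∈ ev e
        pref := fun w w' => H (ψ w) < H (ψ w')
        pref_irrefl := fun w => lt_irrefl _
        pref_trans := fun _ _ _ h1 h2 => h1.trans h2
        smooth := by
          intro e he
          obtain ⟨a, ha1, ha2⟩ :=
            (InvImage.wf (fun w => H (ψ w)) Nat.lt_wfRel.wf).has_min _ he
          exact ⟨a, ha1, ha2⟩ } with hM3
    -- truth lemma
    have hwit' : ∀ (w : Δ) (r : R) (e : Concept C R), ψ w ∈ ev (.ex r e) →
        ∃ w' : Δ, P.interpR r (ψ w) (ψ w') ∧ ψ w' ∈ ev e := by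
      intro w r e hw
      obtain ⟨w', hw'⟩ := hwitψ w r e
      have hp := hwitp (ψ w) r e hw
      exact ⟨w', by rw [hw']; exact hp.1, by rw [hw']; exact hp.2⟩
    have truth : ∀ (e : Concept C R) (w : Δ), w ∈ M3.toClassInterp.eval e ↔ ψ w ∈ ev e :=
      fun e w => truth_lemma_s14 P.toClassInterp ψ hwit' e w
    -- M3 is ranked
    have hranked : IsRanked M3.pref := by
      obtain ⟨h, hconv, hiff⟩ := collapse (fun w : Δ => H (ψ w))
      exact ⟨h, hconv, fun a b => hiff a b⟩
    -- M3 is a model of K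
    have hmodel : M3.isModel K := by
      constructor
      · intro p hp w hw
        exact (truth p.2 w).mpr (hK.1 p hp ((truth p.1 w).mp hw))
      · intro p hp w hw
        have hw1 : ψ w ∈ ev p.1 := (truth p.1 w).mp hw.1
        have hne1 : (ev p.1).Nonempty := ⟨ψ w, hw1⟩
        have hz := hzfp p.1 hne1
        obtain ⟨wz, hwz⟩ := hmemT _ (hzT p.1)
        have hwz1 : wz ∈ M3.toClassInterp.eval p.1 := (truth p.1 wz).mpr (by rw [hwz]; exact hz.1)
        have h1 : ¬ (H (ψ wz) < H (ψ w)) := hw.2 wz hwz1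
        rw [hwz] at h1
        have hminH : ∀ v ∈ ev p.1, ¬ H v < H (ψ w) := by
          intro v hv hlt
          have := hz.2 v hv
          omega
        exact (truth p.2 w).mpr (hdci_H p hp (ψ w) hw1 hminH)
    -- M3 violates c ⊏∼ d : contradiction
    obtain ⟨w₀, hw₀⟩ := hmemT x hxT
    have hw₀c : w₀ ∈ minSet M3.pref (M3.toClassInterp.eval c) := by
      refine ⟨(truth c w₀).mpr (by rw [hw₀]; exact hxc), ?_⟩
      intro v hv
      have hvc : ψ v ∈ ev c := (truth c v).mp hv
      show ¬ H (ψ v) < H (ψ w₀)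
      rw [hw₀]
      exact fun hlt => hx_minH _ hvc hlt
    have hw₀d : w₀ ∉ M3.toClassInterp.eval d := by
      intro h
      exact hxd (by rw [← hw₀]; exact (truth d w₀).mp h)
    exact hw₀d (hΔ M3 hranked hmodel hw₀c)

end DefeasibleDL
end

section
/- For a defeasible knowledge base K = T ∪ D, if T classically entails ⊓ D̄ ⊑ ¬C (where D̄ is the materialisation of D), then the DCI C ⊏∼ D is exceptional with respect to T ∪ D, i.e. T ∪ D ⊨_mod ⊤ ⊏∼ ¬C. -/
namespace DefeasibleDL

/-- A classical interpretation satisfies all GCIs of a TBox `T`. -/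
def satisfiesTBox {C R D : Type} (I : ClassInterp C R D)
    (T : Set (Concept C R × Concept C R)) : Prop :=
  ∀ p ∈ T, I.eval p.1 ⊆ I.eval p.2

/-- The extension of the conjunction `⊓ D̄s` of the materialisation
`D̄s = {¬c ⊔ d : c ⊏∼ d ∈ Ds}` of a set of DCIs. -/
def matSet {C R D : Type} (I : ClassInterp C R D)
    (Ds : Set (Concept C R × Concept C R)) : Set D :=
  {x | ∀ p ∈ Ds, x ∈ I.eval (Concept.disj (Concept.neg p.1) p.2)}

/-- Classical entailment `T ⊨ ⊓D̄s ⊑ ¬c`. -/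
def entailsMatNeg {C R : Type} (T Ds : Set (Concept C R × Concept C R))
    (c : Concept C R) : Prop :=
  ∀ (D : Type) (_ : Nonempty D) (I : ClassInterp C R D),
    satisfiesTBox I T → matSet I Ds ⊆ (I.eval c)ᶜ

/-- if `T` classically entails `⊓D̄ ⊑ ¬c` (with `D̄` the
materialisation of the DTBox `D`), then the DCI `c ⊏∼ d` is exceptional with
respect to `K = T ∪ D`, i.e. `K ⊨_mod ⊤ ⊏∼ ¬c`. -/
theorem materialisation_exceptional {C R : Type} [Finite C] [Finite R]
    (K : KB C R) (c d : Concept C R)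
    (h : entailsMatNeg K.tbox K.dbox c) :
    modEntails K (Stmt.dci Concept.top (Concept.neg c)) := by
  intro D hD P _ hmodel
  intro x hx
  have hmin : ∀ y : D, ¬ P.pref y x := fun y => hx.2 y trivial
  have hmat : x ∈ matSet P.toClassInterp K.dbox := by
    intro p hp
    by_cases hxa : x ∈ P.toClassInterp.eval p.1
    · exact Or.inr (hmodel.2 p hp ⟨hxa, fun y _ => hmin y⟩)
    · exact Or.inl hxa
  exact h D hD P.toClassInterp hmodel.1 hmat

end DefeasibleDL
end
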